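/- For all λ > 0, μ > 0, every integer k ≥ 1 and every t > 0, the density of the first-hitting time of state k for the iterated Poisson process satisfies Σ_{j=0}^{k-1} p_j(t) · λ e^{-μ} μ^{k-j}/(k-j)! = (e^{-μ} μ^k/k!) λ e^{-λ(1-e^{-μ})t} · [B_{k+1}(λ e^{-μ} t)/(λ e^{-μ} t) - B_k(λ e^{-μ} t)], the bracket being the derivative B_k'(λ e^{-μ} t) of the Bell polynomial. -/

import Mathlib

open scoped BigOperators
open Filter MeasureTheory

/-- Bell polynomial: `B n x = e^{-x} * Σ_{k=0}^∞ k^n x^k / k!` (n-th moment of Poisson(x)). -/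
noncomputable def bell (n : ℕ) (x : ℝ) : ℝ :=
  Real.exp (-x) * ∑' k : ℕ, (k : ℝ) ^ n * x ^ k / (Nat.factorial k : ℝ)

/-- pmf of the iterated Poisson process:
`p_m(t) = e^{-λt(1-e^{-μ})} (μ^m/m!) B_m(λ t e^{-μ})`. -/
noncomputable def iterP (lam mu t : ℝ) (m : ℕ) : ℝ :=
  Real.exp (-lam * t * (1 - Real.exp (-mu))) * (mu ^ m / (Nat.factorial m : ℝ)) *
    bell m (lam * t * Real.exp (-mu))

lemma summ_pow (j : ℕ) (x : ℝ) (hx : 0 ≤ x) :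
    Summable (fun n : ℕ => (n : ℝ) ^ j * x ^ n / (Nat.factorial n : ℝ)) := by
  refine Summable.of_nonneg_of_le (fun n => by positivity) (fun n => ?_)
    (Real.summable_pow_div_factorial ((2:ℝ) ^ j * x))
  have h2 : (n : ℝ) ≤ 2 ^ n := by exact_mod_cast (Nat.lt_two_pow_self (n := n)).le
  have h1 : (n : ℝ) ^ j ≤ ((2:ℝ) ^ j) ^ n := by
    calc (n:ℝ)^j ≤ ((2:ℝ)^n)^j := pow_le_pow_left₀ (Nat.cast_nonneg n) h2 j
      _ = ((2:ℝ)^j)^n := by rw [← pow_mul, ← pow_mul, Nat.mul_comm]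
  rw [mul_pow]
  gcongr

/-- Bell polynomial recurrence `B_{k+1}(x) = x Σ_{j≤k} C(k,j) B_j(x)`. -/
lemma bell_rec (k : ℕ) (x : ℝ) (hx : 0 ≤ x) :
    bell (k+1) x = x * ∑ j ∈ Finset.range (k+1), (k.choose j : ℝ) * bell j x := by
  simp only [bell, Finset.mul_sum]
  have key : (∑' n : ℕ, (n : ℝ) ^ (k+1) * x ^ n / (Nat.factorial n : ℝ))
      = x * ∑ j ∈ Finset.range (k+1), (k.choose j : ℝ) *
        ∑' n : ℕ, (n : ℝ) ^ j * x ^ n / (Nat.factorial n : ℝ) := by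
    have step : ∀ n : ℕ, ((n+1 : ℕ) : ℝ) ^ (k+1) * x ^ (n+1) / (Nat.factorial (n+1) : ℝ)
        = ∑ j ∈ Finset.range (k+1), (k.choose j : ℝ) *
            (x * ((n:ℝ) ^ j * x ^ n / (Nat.factorial n : ℝ))) := by
      intro n
      have hfac : (Nat.factorial (n+1) : ℝ) = ((n:ℝ)+1) * (Nat.factorial n : ℝ) := by
        push_cast [Nat.factorial_succ]; ring
      have hexp : ((n:ℝ)+1) ^ k = ∑ j ∈ Finset.range (k+1), (n:ℝ) ^ j * (k.choose j : ℝ) := by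
        have := add_pow (n:ℝ) 1 k
        simpa using this
      push_cast
      rw [hfac, pow_succ]
      have hne : ((n:ℝ)+1) ≠ 0 := by positivity
      have hmid : ((n:ℝ)+1)^k * ((n:ℝ)+1) * x^(n+1) / (((n:ℝ)+1) * (Nat.factorial n : ℝ))
          = ((n:ℝ)+1)^k * (x * (x^n / (Nat.factorial n : ℝ))) := by
        have hf : (Nat.factorial n : ℝ) ≠ 0 := by positivity
        field_simp
        ring
      rw [hmid, hexp, Finset.sum_mul]
      exact Finset.sum_congr rfl fun j _ => by ring
    rw [Summable.tsum_eq_zero_add (summ_pow (k+1) x hx)]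
    rw [tsum_congr step]
    rw [Summable.tsum_finsetSum (fun j _ => ((summ_pow j x hx).mul_left x).mul_left _)]
    simp only [Nat.cast_zero]
    rw [zero_pow (by omega), zero_mul, zero_div, zero_add, Finset.mul_sum]
    refine Finset.sum_congr rfl fun j _ => ?_
    rw [tsum_mul_left, tsum_mul_left]
    ring
  rw [key]
  simp only [Finset.mul_sum]
  refine Finset.sum_congr rfl fun j _ => ?_
  ring

/-- first-hitting-time density of state `k` for the iterated Poisson process:
`Σ_{j=0}^{k-1} p_j(t) λ e^{-μ} μ^{k-j}/(k-j)!
  = (e^{-μ}μ^k/k!) λ e^{-λ(1-e^{-μ})t} [B_{k+1}(λe^{-μ}t)/(λe^{-μ}t) - B_k(λe^{-μ}t)]`. -/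
theorem stmt17 (lam mu t : ℝ) (hlam : 0 < lam) (hmu : 0 < mu) (ht : 0 < t)
    (k : ℕ) (hk : 1 ≤ k) :
    ∑ j ∈ Finset.range k, iterP lam mu t j *
        (lam * Real.exp (-mu) * mu ^ (k - j) / (Nat.factorial (k - j) : ℝ))
      = Real.exp (-mu) * mu ^ k / (Nat.factorial k : ℝ) * lam *
          Real.exp (-(lam * (1 - Real.exp (-mu))) * t) *
          (bell (k + 1) (lam * Real.exp (-mu) * t) / (lam * Real.exp (-mu) * t)
            - bell k (lam * Real.exp (-mu) * t)) := by
  set x := lam * Real.exp (-mu) * t with hxdef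
  have hx : 0 < x := by positivity
  have hb := bell_rec k x hx.le
  rw [Finset.sum_range_succ] at hb
  have hkey : bell (k+1) x / x - bell k x
      = ∑ j ∈ Finset.range k, (k.choose j : ℝ) * bell j x := by
    rw [hb, mul_div_cancel_left₀ _ hx.ne']
    simp
  rw [hkey, Finset.mul_sum]
  refine Finset.sum_congr rfl fun j hj => ?_
  have hjk : j ≤ k := (Finset.mem_range.mp hj).le
  have harg : lam * t * Real.exp (-mu) = x := by rw [hxdef]; ring
  have hexparg : -lam * t * (1 - Real.exp (-mu)) = -(lam * (1 - Real.exp (-mu))) * t := by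
    ring
  rw [iterP, harg, hexparg]
  have hfac : (Nat.factorial k : ℝ) = (k.choose j : ℝ) * (Nat.factorial j : ℝ) *
      (Nat.factorial (k - j) : ℝ) := by
    exact_mod_cast (Nat.choose_mul_factorial_mul_factorial hjk).symm
  have hpow : mu ^ k = mu ^ j * mu ^ (k - j) := (pow_mul_pow_sub mu hjk).symm
  rw [hfac, hpow]
  have h1 : (Nat.factorial j : ℝ) ≠ 0 := by positivity
  have h2 : (Nat.factorial (k - j) : ℝ) ≠ 0 := by positivity
  have h3 : (k.choose j : ℝ) ≠ 0 := by
    exact_mod_cast (Nat.choose_pos hjk).ne'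
  field_simp
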